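/- Let λ be a Young diagram and define the Laurent polynomial h_λ(t) ∈ ℤ[t,t^{−1}] by h_λ(t) = Σ_{(a,a)∈λ, a≥1} t^{−a} − Σ_{((i,j),(l,k))∈λ×λ : i−l = j−k = a, a∈ℤ, a∉{0,1}} t^{a} + Σ_{((i,j),(l,k))∈λ×λ : i−l+1 = j−k = a, a∈ℤ, a∉{0,1}} t^{a}. Then there exists a Laurent polynomial B(t) ∈ ℤ[t,t^{−1}] such that h_λ(t) = B(t) − t·B(t^{−1}). -/

import Mathlib

open LaurentPolynomial Finset

/-- The ring involution of `ℤ[T,T⁻¹]` sending `T ↦ T⁻¹`, induced by negation on the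
exponents. -/
noncomputable def laurentInvert : LaurentPolynomial ℤ ≃ₐ[ℤ] LaurentPolynomial ℤ :=
  AddMonoidAlgebra.domCongr ℤ ℤ (AddEquiv.neg ℤ)

/-- The Laurent polynomial
`h_μ(t) = Σ_{(a,a)∈μ, a≥1} t^{−a}
  − Σ_{((i,j),(l,k))∈μ×μ : i−l = j−k = a, a∉{0,1}} t^{a}
  + Σ_{((i,j),(l,k))∈μ×μ : i−l+1 = j−k = a, a∉{0,1}} t^{a}`. -/
noncomputable def hLam (μ : YoungDiagram) : LaurentPolynomial ℤ :=
  (∑ c ∈ μ.cells.filter (fun c => c.1 = c.2 ∧ 1 ≤ c.1), T (-(c.1 : ℤ)))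
  - (∑ p ∈ (μ.cells ×ˢ μ.cells).filter
        (fun p => (p.1.1 : ℤ) - p.2.1 = (p.1.2 : ℤ) - p.2.2
          ∧ (p.1.1 : ℤ) - p.2.1 ≠ 0 ∧ (p.1.1 : ℤ) - p.2.1 ≠ 1),
      T ((p.1.1 : ℤ) - p.2.1))
  + (∑ p ∈ (μ.cells ×ˢ μ.cells).filter
        (fun p => (p.1.1 : ℤ) - p.2.1 + 1 = (p.1.2 : ℤ) - p.2.2
          ∧ (p.1.1 : ℤ) - p.2.1 + 1 ≠ 0 ∧ (p.1.1 : ℤ) - p.2.1 + 1 ≠ 1),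
      T ((p.1.1 : ℤ) - p.2.1 + 1))

/-! ### Auxiliary coefficient lemmas -/

lemma laurentInvert_T (n : ℤ) : laurentInvert (T n) = T (-n) :=
  AddMonoidAlgebra.domCongr_single (AddEquiv.neg ℤ) n 1

lemma LPsub_apply (g h : LaurentPolynomial ℤ) (m : ℤ) : (g - h).coeff m = g.coeff m - h.coeff m := rfl
lemma LPadd_apply (g h : LaurentPolynomial ℤ) (m : ℤ) : (g + h).coeff m = g.coeff m + h.coeff m := rfl
lemma LPsmul_apply (a : ℤ) (g : LaurentPolynomial ℤ) (m : ℤ) : (a • g).coeff m = a * g.coeff m := rfl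

/-- Any coefficientwise antisymmetric (under `n ↦ 1 - n`, with a sign) Laurent polynomial
is of the form `B - T·B(t⁻¹)`. -/
lemma exists_B (f : LaurentPolynomial ℤ) (hf : ∀ n : ℤ, f.coeff (1 - n) = - f.coeff n) :
    ∃ B : LaurentPolynomial ℤ, f = B - T 1 * laurentInvert B := by
  classical
  set S := f.coeff.support.filter (fun n => 0 < n) with hS
  refine ⟨∑ n ∈ S, f.coeff n • T n, ?_⟩
  have h1 : T (1:ℤ) * laurentInvert (∑ n ∈ S, f.coeff n • T n) = ∑ n ∈ S, f.coeff n • T (1 - n) := by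
    rw [map_sum, Finset.mul_sum]
    refine Finset.sum_congr rfl fun n _ => ?_
    rw [map_smul, laurentInvert_T, mul_smul_comm, ← T_add]
    ring_nf
  rw [h1, ← Finset.sum_sub_distrib]
  refine AddMonoidAlgebra.coeff_injective (Finsupp.ext fun m => ?_)
  rw [AddMonoidAlgebra.coeff_sum, Finset.sum_apply']
  simp only [LPsub_apply, LPsmul_apply, T_apply, mul_sub]
  rcases lt_or_ge 0 m with hm | hm
  · have key : ∀ n ∈ S, f.coeff n * (if n = m then (1:ℤ) else 0) - f.coeff n * (if 1 - n = m then 1 else 0)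
        = if n = m then f.coeff m else 0 := by
      intro n hn
      simp only [hS, Finset.mem_filter] at hn
      have h2 : 1 - n ≠ m := by omega
      simp only [h2, if_false, mul_zero, sub_zero]
      split
      · next h => subst h; ring
      · exact mul_zero _
    rw [Finset.sum_congr rfl key, Finset.sum_ite_eq' S m fun _ => f.coeff m]
    by_cases hmS : m ∈ S
    · simp [hmS]
    · simp only [hmS, if_false]
      simp only [hS, Finset.mem_filter, Finsupp.mem_support_iff] at hmS
      by_contra h
      exact hmS ⟨fun h0 => h (by rw [h0]), hm⟩
  · have key : ∀ n ∈ S, f.coeff n * (if n = m then (1:ℤ) else 0) - f.coeff n * (if 1 - n = m then 1 else 0)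
        = if n = 1 - m then -f.coeff (1 - m) else 0 := by
      intro n hn
      simp only [hS, Finset.mem_filter] at hn
      have h1 : n ≠ m := by omega
      have h2 : (1 - n = m) = (n = 1 - m) := by
        apply propext; omega
      simp only [h1, if_false, mul_zero, zero_sub, h2]
      split
      · next h => subst h; ring
      · simp
    rw [Finset.sum_congr rfl key, Finset.sum_ite_eq' S (1-m) fun _ => -f.coeff (1-m)]
    have hfm := hf m
    by_cases hmS : (1-m) ∈ S
    · simp [hmS, hfm]
    · simp only [hmS, if_false]
      simp only [hS, Finset.mem_filter, Finsupp.mem_support_iff] at hmS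
      have h0 : f.coeff (1 - m) = 0 := by
        by_contra h
        exact hmS ⟨h, by omega⟩
      rw [hfm] at h0
      omega

/-! ### Counting cells -/

/-- The number of cells `c` of `μ` such that `c + (x, y)` is still in `μ`. -/
def cnt (μ : YoungDiagram) (x y : ℕ) : ℕ :=
  (μ.cells.filter (fun c => (c.1 + x, c.2 + y) ∈ μ)).card

lemma rowLen_colLen_zero (μ : YoungDiagram) (n : ℕ) (hn : μ.colLen 0 ≤ n) :
    μ.rowLen n = 0 := by
  by_contra h
  have : (n, 0) ∈ μ := YoungDiagram.mem_iff_lt_rowLen.mpr (by omega)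
  have := YoungDiagram.mem_iff_lt_colLen.mp this
  omega

lemma cnt_eq_sum (μ : YoungDiagram) (x y K : ℕ) (hK : μ.colLen 0 ≤ K) :
    cnt μ x y = ∑ i ∈ range K, (μ.rowLen (i + x) - y) := by
  rw [cnt, Finset.card_eq_sum_card_fiberwise (f := Prod.fst) (t := range K)
    (fun c hc => by
      simp only [Finset.mem_coe, Finset.mem_filter, YoungDiagram.mem_cells] at hc
      rw [Finset.mem_coe, Finset.mem_range]
      have : (c.1, 0) ∈ μ := μ.up_left_mem le_rfl (Nat.zero_le _) hc.1
      exact lt_of_lt_of_le (YoungDiagram.mem_iff_lt_colLen.mp this) hK)]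
  refine Finset.sum_congr rfl fun i _ => ?_
  rw [← Finset.card_range (μ.rowLen (i + x) - y)]
  refine Finset.card_nbij' Prod.snd (fun j => (i, j)) ?_ ?_ ?_ ?_
  · intro c hc
    simp only [Finset.mem_coe, Finset.mem_filter, YoungDiagram.mem_cells] at hc
    obtain ⟨⟨h1, h2⟩, h3⟩ := hc
    rw [YoungDiagram.mem_iff_lt_rowLen] at h1 h2
    rw [h3] at h1 h2
    have := μ.rowLen_anti i (i + x) (Nat.le_add_right _ _)
    rw [Finset.mem_coe, Finset.mem_range]
    omega
  · intro j hj
    rw [Finset.mem_coe, Finset.mem_range] at hj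
    have hle := μ.rowLen_anti i (i + x) (Nat.le_add_right _ _)
    simp only [Finset.mem_coe, Finset.mem_filter, YoungDiagram.mem_cells, YoungDiagram.mem_iff_lt_rowLen]
    refine ⟨⟨by omega, by omega⟩, by trivial⟩
  · intro c hc
    simp only [Finset.mem_coe, Finset.mem_filter] at hc
    rw [← hc.2]
  · intro j _; rfl

lemma ind_sum (μ : YoungDiagram) (a K : ℕ) (hK : μ.colLen 0 ≤ K) :
    (∑ i ∈ range K, if a < μ.rowLen (i + a) then 1 else 0)
      = (if (a, a) ∈ μ then 1 else 0)
        + ∑ i ∈ range K, if a < μ.rowLen (i + (a + 1)) then 1 else 0 := by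
  have hchi : (if (a, a) ∈ μ then (1:ℕ) else 0) = if a < μ.rowLen a then 1 else 0 := by
    simp only [YoungDiagram.mem_iff_lt_rowLen]
  rw [hchi]
  rcases Nat.eq_zero_or_pos K with hK0 | hKpos
  · subst hK0
    have h0 : μ.rowLen a = 0 := rowLen_colLen_zero μ a (by omega)
    simp [h0]
  · obtain ⟨K', rfl⟩ : ∃ K', K = K' + 1 := ⟨K - 1, by omega⟩
    rw [Finset.sum_range_succ' (fun i => if a < μ.rowLen (i + a) then 1 else 0) K',
      Finset.sum_range_succ (fun i => if a < μ.rowLen (i + (a + 1)) then 1 else 0) K']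
    have h0 : μ.rowLen (K' + (a + 1)) = 0 := rowLen_colLen_zero μ _ (by omega)
    have hre : ∀ i : ℕ, i + 1 + a = i + (a + 1) := fun i => by omega
    simp only [h0, Nat.not_lt_zero, if_false, add_zero, Nat.zero_add, hre]
    omega

/-- The key combinatorial identity. -/
lemma core (μ : YoungDiagram) (a : ℕ) :
    cnt μ a a + cnt μ (a+1) (a+1)
      = (if (a, a) ∈ μ then 1 else 0) + cnt μ (a+1) a + cnt μ a (a+1) := by
  rw [cnt_eq_sum μ a a _ le_rfl, cnt_eq_sum μ (a+1) (a+1) _ le_rfl,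
    cnt_eq_sum μ (a+1) a _ le_rfl, cnt_eq_sum μ a (a+1) _ le_rfl]
  have dec : ∀ z : ℕ, ∀ i ∈ range (μ.colLen 0),
      μ.rowLen (i + z) - a
        = (μ.rowLen (i + z) - (a+1)) + (if a < μ.rowLen (i + z) then 1 else 0) := by
    intro z i _; split <;> omega
  rw [Finset.sum_congr rfl (dec a), Finset.sum_congr rfl (dec (a+1)),
    Finset.sum_add_distrib, Finset.sum_add_distrib,
    ind_sum μ a _ le_rfl]
  ring

lemma card_shift₁ (μ : YoungDiagram) (x y : ℕ) :
    ((μ.cells ×ˢ μ.cells).filter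
      (fun p => p.1.1 + x = p.2.1 ∧ p.1.2 + y = p.2.2)).card = cnt μ x y := by
  rw [cnt]
  refine Finset.card_nbij' Prod.fst (fun c => (c, (c.1 + x, c.2 + y))) ?_ ?_ ?_ ?_
  · intro p hp
    simp only [Finset.mem_coe, Finset.mem_filter, Finset.mem_product, YoungDiagram.mem_cells] at hp ⊢
    obtain ⟨⟨h1, h2⟩, h3, h4⟩ := hp
    refine ⟨h1, ?_⟩
    rw [h3, h4]
    exact h2
  · intro c hc
    simp only [Finset.mem_coe, Finset.mem_filter, Finset.mem_product, YoungDiagram.mem_cells] at hc ⊢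
    exact ⟨⟨hc.1, hc.2⟩, trivial, trivial⟩
  · intro p hp
    simp only [Finset.mem_coe, Finset.mem_filter, Finset.mem_product] at hp
    obtain ⟨-, h3, h4⟩ := hp
    rw [Prod.ext_iff]
    exact ⟨rfl, by rw [Prod.ext_iff]; exact ⟨h3, h4⟩⟩
  · intro c _; rfl

lemma card_shift₂ (μ : YoungDiagram) (x y : ℕ) :
    ((μ.cells ×ˢ μ.cells).filter
      (fun p => p.2.1 + x = p.1.1 ∧ p.2.2 + y = p.1.2)).card = cnt μ x y := by
  rw [cnt]
  refine Finset.card_nbij' Prod.snd (fun c => ((c.1 + x, c.2 + y), c)) ?_ ?_ ?_ ?_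
  · intro p hp
    simp only [Finset.mem_coe, Finset.mem_filter, Finset.mem_product, YoungDiagram.mem_cells] at hp ⊢
    obtain ⟨⟨h1, h2⟩, h3, h4⟩ := hp
    refine ⟨h2, ?_⟩
    rw [h3, h4]
    exact h1
  · intro c hc
    simp only [Finset.mem_coe, Finset.mem_filter, Finset.mem_product, YoungDiagram.mem_cells] at hc ⊢
    exact ⟨⟨hc.2, hc.1⟩, trivial, trivial⟩
  · intro p hp
    simp only [Finset.mem_coe, Finset.mem_filter, Finset.mem_product] at hp
    obtain ⟨-, h3, h4⟩ := hp
    rw [Prod.ext_iff]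
    exact ⟨by rw [Prod.ext_iff]; exact ⟨h3, h4⟩, rfl⟩
  · intro c _; rfl

/-! ### Coefficients of `hLam` -/

lemma hLam_apply (μ : YoungDiagram) (m : ℤ) :
    (hLam μ).coeff m
      = ((μ.cells.filter (fun c => (c.1 = c.2 ∧ 1 ≤ c.1) ∧ -(c.1 : ℤ) = m)).card : ℤ)
        - ((μ.cells ×ˢ μ.cells).filter
            (fun p => ((p.1.1 : ℤ) - p.2.1 = (p.1.2 : ℤ) - p.2.2
              ∧ (p.1.1 : ℤ) - p.2.1 ≠ 0 ∧ (p.1.1 : ℤ) - p.2.1 ≠ 1)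
              ∧ (p.1.1 : ℤ) - p.2.1 = m)).card
        + ((μ.cells ×ˢ μ.cells).filter
            (fun p => ((p.1.1 : ℤ) - p.2.1 + 1 = (p.1.2 : ℤ) - p.2.2
              ∧ (p.1.1 : ℤ) - p.2.1 + 1 ≠ 0 ∧ (p.1.1 : ℤ) - p.2.1 + 1 ≠ 1)
              ∧ (p.1.1 : ℤ) - p.2.1 + 1 = m)).card := by
  rw [hLam, LPadd_apply, LPsub_apply, AddMonoidAlgebra.coeff_sum, AddMonoidAlgebra.coeff_sum,
    AddMonoidAlgebra.coeff_sum, Finset.sum_apply', Finset.sum_apply', Finset.sum_apply']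
  simp only [T_apply]
  rw [Finset.sum_boole, Finset.sum_boole, Finset.sum_boole,
    Finset.filter_filter, Finset.filter_filter, Finset.filter_filter]

/-! ### Antisymmetry of `hLam` -/

lemma hLam_anti_aux (μ : YoungDiagram) (m : ℤ) (hm : m ≤ 0) :
    (hLam μ).coeff m + (hLam μ).coeff (1 - m) = 0 := by
  rcases eq_or_lt_of_le hm with h0 | hneg
  · -- m = 0 : all filters are empty
    subst h0
    rw [hLam_apply, hLam_apply]
    have e1 : (μ.cells.filter (fun c => (c.1 = c.2 ∧ 1 ≤ c.1) ∧ -(c.1 : ℤ) = 0)) = ∅ := by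
      rw [Finset.filter_eq_empty_iff]; intro c _; push_neg; intro h; omega
    have e2 : (μ.cells.filter (fun c => (c.1 = c.2 ∧ 1 ≤ c.1) ∧ -(c.1 : ℤ) = 1 - 0)) = ∅ := by
      rw [Finset.filter_eq_empty_iff]; intro c _; push_neg; intro h; omega
    have e3 : ((μ.cells ×ˢ μ.cells).filter
        (fun p => ((p.1.1 : ℤ) - p.2.1 = (p.1.2 : ℤ) - p.2.2
          ∧ (p.1.1 : ℤ) - p.2.1 ≠ 0 ∧ (p.1.1 : ℤ) - p.2.1 ≠ 1)
          ∧ (p.1.1 : ℤ) - p.2.1 = 0)) = ∅ := by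
      rw [Finset.filter_eq_empty_iff]; intro p _; push_neg; intro h; omega
    have e4 : ((μ.cells ×ˢ μ.cells).filter
        (fun p => ((p.1.1 : ℤ) - p.2.1 = (p.1.2 : ℤ) - p.2.2
          ∧ (p.1.1 : ℤ) - p.2.1 ≠ 0 ∧ (p.1.1 : ℤ) - p.2.1 ≠ 1)
          ∧ (p.1.1 : ℤ) - p.2.1 = 1 - 0)) = ∅ := by
      rw [Finset.filter_eq_empty_iff]; intro p _; push_neg; intro h; omega
    have e5 : ((μ.cells ×ˢ μ.cells).filter
        (fun p => ((p.1.1 : ℤ) - p.2.1 + 1 = (p.1.2 : ℤ) - p.2.2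
          ∧ (p.1.1 : ℤ) - p.2.1 + 1 ≠ 0 ∧ (p.1.1 : ℤ) - p.2.1 + 1 ≠ 1)
          ∧ (p.1.1 : ℤ) - p.2.1 + 1 = 0)) = ∅ := by
      rw [Finset.filter_eq_empty_iff]; intro p _; push_neg; intro h; omega
    have e6 : ((μ.cells ×ˢ μ.cells).filter
        (fun p => ((p.1.1 : ℤ) - p.2.1 + 1 = (p.1.2 : ℤ) - p.2.2
          ∧ (p.1.1 : ℤ) - p.2.1 + 1 ≠ 0 ∧ (p.1.1 : ℤ) - p.2.1 + 1 ≠ 1)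
          ∧ (p.1.1 : ℤ) - p.2.1 + 1 = 1 - 0)) = ∅ := by
      rw [Finset.filter_eq_empty_iff]; intro p _; push_neg; intro h; omega
    rw [e1, e2, e3, e4, e5, e6]
    simp
  · -- m ≤ -1 : write m = -a with a ≥ 1
    obtain ⟨a, ha, rfl⟩ : ∃ a : ℕ, 1 ≤ a ∧ m = -(a : ℤ) :=
      ⟨(-m).toNat, by omega, by omega⟩
    rw [hLam_apply, hLam_apply]
    -- the six cardinalities
    have e1 : (μ.cells.filter (fun c => (c.1 = c.2 ∧ 1 ≤ c.1) ∧ -(c.1 : ℤ) = -(a:ℤ)))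
        = μ.cells.filter (fun c => c = (a, a)) := by
      apply Finset.filter_congr
      intro c _
      rw [Prod.ext_iff]
      constructor
      · rintro ⟨⟨h1, h2⟩, h3⟩; constructor <;> [omega; omega]
      · rintro ⟨h1, h2⟩; refine ⟨⟨by omega, by omega⟩, by omega⟩
    have e1' : (μ.cells.filter (fun c => c = ((a:ℕ), (a:ℕ)))).card
        = if (a, a) ∈ μ then 1 else 0 := by
      rw [Finset.filter_eq']
      split
      · next h => rw [Finset.card_singleton, if_pos ((YoungDiagram.mem_cells _).mp h)]
      · next h => rw [Finset.card_empty, if_neg (fun hh => h ((YoungDiagram.mem_cells _).mpr hh))]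
    have e2 : (μ.cells.filter (fun c => (c.1 = c.2 ∧ 1 ≤ c.1) ∧ -(c.1 : ℤ) = 1 - -(a:ℤ))) = ∅ := by
      rw [Finset.filter_eq_empty_iff]; intro c _; push_neg; intro h; omega
    have e3 : ((μ.cells ×ˢ μ.cells).filter
        (fun p => ((p.1.1 : ℤ) - p.2.1 = (p.1.2 : ℤ) - p.2.2
          ∧ (p.1.1 : ℤ) - p.2.1 ≠ 0 ∧ (p.1.1 : ℤ) - p.2.1 ≠ 1)
          ∧ (p.1.1 : ℤ) - p.2.1 = -(a:ℤ))).card = cnt μ a a := by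
      rw [← card_shift₁ μ a a]
      congr 1
      apply Finset.filter_congr
      intro p _
      constructor
      · rintro ⟨⟨h1, -, -⟩, h3⟩; omega
      · rintro ⟨h1, h2⟩; refine ⟨⟨by omega, by omega, by omega⟩, by omega⟩
    have e4 : ((μ.cells ×ˢ μ.cells).filter
        (fun p => ((p.1.1 : ℤ) - p.2.1 = (p.1.2 : ℤ) - p.2.2
          ∧ (p.1.1 : ℤ) - p.2.1 ≠ 0 ∧ (p.1.1 : ℤ) - p.2.1 ≠ 1)
          ∧ (p.1.1 : ℤ) - p.2.1 = 1 - -(a:ℤ))).card = cnt μ (a+1) (a+1) := by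
      rw [← card_shift₂ μ (a+1) (a+1)]
      congr 1
      apply Finset.filter_congr
      intro p _
      constructor
      · rintro ⟨⟨h1, -, -⟩, h3⟩; constructor <;> omega
      · rintro ⟨h1, h2⟩; refine ⟨⟨by omega, by omega, by omega⟩, by omega⟩
    have e5 : ((μ.cells ×ˢ μ.cells).filter
        (fun p => ((p.1.1 : ℤ) - p.2.1 + 1 = (p.1.2 : ℤ) - p.2.2
          ∧ (p.1.1 : ℤ) - p.2.1 + 1 ≠ 0 ∧ (p.1.1 : ℤ) - p.2.1 + 1 ≠ 1)
          ∧ (p.1.1 : ℤ) - p.2.1 + 1 = -(a:ℤ))).card = cnt μ (a+1) a := by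
      rw [← card_shift₁ μ (a+1) a]
      congr 1
      apply Finset.filter_congr
      intro p _
      constructor
      · rintro ⟨⟨h1, -, -⟩, h3⟩; constructor <;> omega
      · rintro ⟨h1, h2⟩; refine ⟨⟨by omega, by omega, by omega⟩, by omega⟩
    have e6 : ((μ.cells ×ˢ μ.cells).filter
        (fun p => ((p.1.1 : ℤ) - p.2.1 + 1 = (p.1.2 : ℤ) - p.2.2
          ∧ (p.1.1 : ℤ) - p.2.1 + 1 ≠ 0 ∧ (p.1.1 : ℤ) - p.2.1 + 1 ≠ 1)
          ∧ (p.1.1 : ℤ) - p.2.1 + 1 = 1 - -(a:ℤ))).card = cnt μ a (a+1) := by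
      rw [← card_shift₂ μ a (a+1)]
      congr 1
      apply Finset.filter_congr
      intro p _
      constructor
      · rintro ⟨⟨h1, -, -⟩, h3⟩; constructor <;> omega
      · rintro ⟨h1, h2⟩; refine ⟨⟨by omega, by omega, by omega⟩, by omega⟩
    rw [e1, e1', e2, e3, e4, e5, e6]
    have hcore := core μ a
    split at hcore <;> split <;> simp_all <;> omega

lemma hLam_anti (μ : YoungDiagram) (m : ℤ) : (hLam μ).coeff (1 - m) = - (hLam μ).coeff m := by
  rcases le_or_gt m 0 with hm | hm
  · have := hLam_anti_aux μ m hm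
    linarith
  · have h1 : (1 : ℤ) - m ≤ 0 := by omega
    have := hLam_anti_aux μ (1 - m) h1
    have h2 : (1 : ℤ) - (1 - m) = m := by ring
    rw [h2] at this
    linarith

/-- **Lemma.** For every Young diagram `μ` there is a Laurent polynomial `B(t)` with
`h_μ(t) = B(t) − t·B(t⁻¹)`. -/
theorem hLam_eq_B_sub_T_mul_invert_B (μ : YoungDiagram) :
    ∃ B : LaurentPolynomial ℤ, hLam μ = B - T 1 * laurentInvert B := by
  exact exists_B (hLam μ) (hLam_anti μ)
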